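/- Let M and M^{(−m)} be symmetric n×n real matrices, B := M − M^{(−m)}, λ the largest eigenvalue of M with unit eigenvector u, and suppose the largest eigenvalue of M^{(−m)} has multiplicity one with corresponding unit eigenvector u^{(−m)} satisfying ⟨u, u^{(−m)}⟩ ≥ 0, and that δ := min_{i ≥ 2} |λ_i(M^{(−m)}) − λ| > 0. If η := √2·‖B‖/δ < 1, then ‖B u‖₂ ≤ ‖B u^{(−m)}‖₂ / (1 − η). -/

import Mathlib

open MeasureTheory Filter Finset Matrix
open scoped ENNReal

namespace HPC

/-- Hyperedges: `d`-element subsets of `[n]`. -/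
abbrev Edge (n d : ℕ) : Type := {e : Finset (Fin n) // e.card = d}

/-- A hyperedge configuration. -/
abbrev Config (n d : ℕ) : Type := Edge n d → Bool

instance {n : ℕ} : MeasurableSpace (Finset (Fin n)) := ⊤

/-- Bernoulli measure on `Bool` with success probability `p`. -/
noncomputable def bern (p : ℝ) : Measure Bool :=
  ENNReal.ofReal p • Measure.dirac true + ENNReal.ofReal (1 - p) • Measure.dirac false

/-- Law of the indicator of hyperedge `e` when the planted set is `S`:
hyperedges inside `S` are present surely, the others with probability `p`. -/
noncomputable def edgeLaw (n d : ℕ) (p : ℝ) (S : Finset (Fin n)) (e : Edge n d) :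
    Measure Bool :=
  if (e : Finset (Fin n)) ⊆ S then Measure.dirac true else bern p

/-- Conditional law of the configuration given the planted set `S`. -/
noncomputable def condLaw (n d : ℕ) (p : ℝ) (S : Finset (Fin n)) : Measure (Config n d) :=
  Measure.pi fun e => edgeLaw n d p S e

/-- Marginal law `P_k` of the configuration, the planted set being uniform of size `k`. -/
noncomputable def law (n d : ℕ) (p : ℝ) (k : ℕ) : Measure (Config n d) :=
  (((univ : Finset (Finset (Fin n))).filter fun S => S.card = k).card : ℝ≥0∞)⁻¹ •
    ∑ S ∈ (univ : Finset (Finset (Fin n))).filter fun S => S.card = k, condLaw n d p S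

/-- Joint law of the planted set (uniform of size `k`) and the configuration. -/
noncomputable def jointLaw (n d : ℕ) (p : ℝ) (k : ℕ) :
    Measure (Finset (Fin n) × Config n d) :=
  (((univ : Finset (Finset (Fin n))).filter fun S => S.card = k).card : ℝ≥0∞)⁻¹ •
    ∑ S ∈ (univ : Finset (Finset (Fin n))).filter fun S => S.card = k,
      Measure.map (fun H => (S, H)) (condLaw n d p S)

/-- Adjacency matrix (pairwise co-occurrence counts) of a configuration. -/
noncomputable def adj (n d : ℕ) (H : Config n d) : Matrix (Fin n) (Fin n) ℝ :=
  Matrix.of fun i j =>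
    if i = j then 0 else
      ∑ e : Edge n d,
        if i ∈ (e : Finset (Fin n)) ∧ j ∈ (e : Finset (Fin n)) ∧ H e = true then (1 : ℝ) else 0

/-- Null-model expectation `E₀[A]`. -/
noncomputable def expAdj (n d : ℕ) (p : ℝ) : Matrix (Fin n) (Fin n) ℝ :=
  Matrix.of fun i j => if i = j then 0 else ((n - 2).choose (d - 2) : ℝ) * p

/-- Centered adjacency matrix `M = A − E₀[A]`. -/
noncomputable def centered (n d : ℕ) (p : ℝ) (H : Config n d) : Matrix (Fin n) (Fin n) ℝ :=
  adj n d H - expAdj n d p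

/-- Spectral (ℓ²-operator) norm of a real square matrix. -/
noncomputable def specNorm {n : ℕ} (M : Matrix (Fin n) (Fin n) ℝ) : ℝ :=
  ‖LinearMap.toContinuousLinearMap (Matrix.toEuclideanLin M)‖

/-- Euclidean norm on `Fin n → ℝ`. -/
noncomputable def norm2 {n : ℕ} (v : Fin n → ℝ) : ℝ := Real.sqrt (∑ i, v i ^ 2)

/-- Supremum norm on `Fin n → ℝ`. -/
noncomputable def normInf {n : ℕ} (v : Fin n → ℝ) : ℝ := ‖v‖

/-- Two-to-infinity norm: maximal Euclidean row norm. -/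
noncomputable def norm2toInf {n : ℕ} (M : Matrix (Fin n) (Fin n) ℝ) : ℝ :=
  normInf fun i => norm2 (M i)

/-- `u` is a unit eigenvector of `M` for the eigenvalue `lam`, and `lam` is the
largest eigenvalue of `M`. -/
def IsTopEigenpair {n : ℕ} (M : Matrix (Fin n) (Fin n) ℝ) (lam : ℝ) (u : Fin n → ℝ) : Prop :=
  norm2 u = 1 ∧ M.mulVec u = lam • u ∧
    ∀ (mu : ℝ) (v : Fin n → ℝ), v ≠ 0 → M.mulVec v = mu • v → mu ≤ lam

/-- `T` is a set of indices of `k` largest entries of `|u|` (ties broken arbitrarily). -/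
def IsTopK {n : ℕ} (k : ℕ) (u : Fin n → ℝ) (T : Finset (Fin n)) : Prop :=
  T.card = k ∧ ∀ i ∈ T, ∀ j ∉ T, |u j| ≤ |u i|

/-- Normalized indicator vector `1_T / √|T|`. -/
noncomputable def uInd {n : ℕ} (T : Finset (Fin n)) : Fin n → ℝ :=
  fun i => if i ∈ T then (Real.sqrt T.card)⁻¹ else 0

/-- Normalized indicator vector `1_S / √k`. -/
noncomputable def uStar {n : ℕ} (k : ℕ) (S : Finset (Fin n)) : Fin n → ℝ :=
  fun i => if i ∈ S then (Real.sqrt k)⁻¹ else 0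

/-- `c_e(T) = |e ∩ T|·(|e ∩ T| − 1)`. -/
noncomputable def cE {n : ℕ} (e T : Finset (Fin n)) : ℝ :=
  ((e ∩ T).card : ℝ) * (((e ∩ T).card : ℝ) - 1)

/-- Co-membership matrix of a hyperedge. -/
noncomputable def coB {n : ℕ} (e : Finset (Fin n)) : Matrix (Fin n) (Fin n) ℝ :=
  Matrix.of fun i j => if i ≠ j ∧ i ∈ e ∧ j ∈ e then 1 else 0

/-- `λ* = (1 − p)(k − 1)·C(k−2, d−2)`. -/
noncomputable def lamStar (d k : ℕ) (p : ℝ) : ℝ :=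
  (1 - p) * ((k : ℝ) - 1) * ((k - 2).choose (d - 2) : ℝ)

noncomputable def wIn (n d k : ℕ) (p : ℝ) : ℝ :=
  ((k - 2).choose (d - 2) : ℝ) +
    p * (((n - 2).choose (d - 2) : ℝ) - ((k - 2).choose (d - 2) : ℝ))

noncomputable def wOut (n d : ℕ) (p : ℝ) : ℝ := p * ((n - 2).choose (d - 2) : ℝ)

/-- `M* = (w_in − w_out)·(1_S 1_Sᵀ − I_S)`, the conditional expectation `E_S[M]`. -/
noncomputable def mStarOf (n d k : ℕ) (p : ℝ) (S : Finset (Fin n)) :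
    Matrix (Fin n) (Fin n) ℝ :=
  Matrix.of fun i j =>
    (wIn n d k p - wOut n d p) *
      ((if i ∈ S then (1 : ℝ) else 0) * (if j ∈ S then 1 else 0) -
        if i = j ∧ i ∈ S then 1 else 0)

/-- Leave-one-out perturbation `B^{(m)} = Σ_{e ∋ m} (H_e − p)·B_e`. -/
noncomputable def bMat (n d : ℕ) (p : ℝ) (H : Config n d) (m : Fin n) :
    Matrix (Fin n) (Fin n) ℝ :=
  ∑ e : Edge n d,
    if m ∈ (e : Finset (Fin n)) then
      ((if H e then (1 : ℝ) else 0) - p) • coB (e : Finset (Fin n))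
    else 0

/-- `(lam, U)` is an orthonormal eigendecomposition of `A` with eigenvalues listed in
nonincreasing order. -/
def IsEigenDecomp {n : ℕ} (A : Matrix (Fin n) (Fin n) ℝ) (lam : Fin n → ℝ)
    (U : Fin n → Fin n → ℝ) : Prop :=
  (∀ i j, U i ⬝ᵥ U j = if i = j then (1 : ℝ) else 0) ∧
    (∀ i, A.mulVec (U i) = lam i • U i) ∧ Antitone lam

/-- Maximum of a real function over `Fin n`, `n > 0`. -/
noncomputable def maxOver {n : ℕ} (hn : 0 < n) (f : Fin n → ℝ) : ℝ :=
  (univ : Finset (Fin n)).sup' ⟨⟨0, hn⟩, Finset.mem_univ _⟩ f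

/-- `min_{i ≥ 2} |lam i − x|`, the minimum over non-leading indices. -/
noncomputable def minOffTop {n : ℕ} [NeZero n] (hn : 2 ≤ n) (lam : Fin n → ℝ) (x : ℝ) : ℝ :=
  ((univ : Finset (Fin n)).filter fun i => i ≠ 0).inf'
    ⟨⟨1, by omega⟩, by
      simp only [Finset.mem_filter, Finset.mem_univ, true_and, ne_eq]
      intro h
      simpa using congrArg Fin.val h⟩
    fun i => |lam i - x|

end HPC

open HPC MeasureTheory Filter Finset Matrix
open scoped ENNReal Topology


namespace HPCAux
open HPC Finset Matrix

lemma norm2_eq_norm {n : ℕ} (v : Fin n → ℝ) :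
    norm2 v = ‖(WithLp.equiv 2 (Fin n → ℝ)).symm v‖ := by
  simp [norm2, EuclideanSpace.norm_eq, Real.norm_eq_abs, sq_abs]

lemma norm2_nonneg {n : ℕ} (v : Fin n → ℝ) : 0 ≤ norm2 v :=
  Real.sqrt_nonneg _

lemma norm2_sq {n : ℕ} (v : Fin n → ℝ) : norm2 v ^ 2 = v ⬝ᵥ v := by
  rw [norm2, Real.sq_sqrt (by positivity)]
  simp [dotProduct, sq]

lemma specNorm_mulVec_le {n : ℕ} (B : Matrix (Fin n) (Fin n) ℝ) (v : Fin n → ℝ) :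
    norm2 (B.mulVec v) ≤ specNorm B * norm2 v := by
  rw [norm2_eq_norm, norm2_eq_norm, specNorm]
  have h := (LinearMap.toContinuousLinearMap (Matrix.toEuclideanLin B)).le_opNorm
    ((WithLp.equiv 2 (Fin n → ℝ)).symm v)
  rw [LinearMap.coe_toContinuousLinearMap', WithLp.equiv_symm_apply, Matrix.toEuclideanLin_apply_piLp_toLp] at h
  exact h

lemma norm2_add_le {n : ℕ} (v w : Fin n → ℝ) :
    norm2 (v + w) ≤ norm2 v + norm2 w := by
  rw [norm2_eq_norm, norm2_eq_norm, norm2_eq_norm, WithLp.equiv_symm_apply, WithLp.toLp_add]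
  exact norm_add_le _ _

end HPCAux

/-- **Leave-one-out perturbation transfer.** If `η = √2‖B‖/δ < 1`, then
`‖Bu‖₂ ≤ ‖Bu^{(−m)}‖₂ / (1 − η)`. -/
theorem loo_perturbation_transfer (n : ℕ) [NeZero n] (hn : 2 ≤ n)
    (M Mm : Matrix (Fin n) (Fin n) ℝ) (hM : M.IsSymm) (hMm : Mm.IsSymm)
    (lam : ℝ) (u : Fin n → ℝ) (hu : IsTopEigenpair M lam u)
    (lamm : Fin n → ℝ) (Um : Fin n → Fin n → ℝ) (hdec : IsEigenDecomp Mm lamm Um)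
    (hmult : ∀ i : Fin n, i ≠ 0 → lamm i < lamm 0)
    (um : Fin n → ℝ) (hum_norm : norm2 um = 1)
    (hum_eig : Mm.mulVec um = lamm 0 • um)
    (hsign : 0 ≤ u ⬝ᵥ um)
    (hδ : 0 < minOffTop hn lamm lam)
    (hη : Real.sqrt 2 * specNorm (M - Mm) / minOffTop hn lamm lam < 1) :
    norm2 ((M - Mm).mulVec u)
      ≤ norm2 ((M - Mm).mulVec um) /
          (1 - Real.sqrt 2 * specNorm (M - Mm) / minOffTop hn lamm lam) := by
  classical
  obtain ⟨hu_norm, hu_eig, -⟩ := hu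
  obtain ⟨horth, heig, -⟩ := hdec
  set δ := minOffTop hn lamm lam with hδdef
  set B := M - Mm with hBdef
  set s := specNorm B with hsdef
  have hs0 : 0 ≤ s := by rw [hsdef, HPC.specNorm]; exact norm_nonneg _
  set Q : Matrix (Fin n) (Fin n) ℝ := Matrix.of Um with hQdef
  have hQent : ∀ (v : Fin n → ℝ) (i : Fin n), (Q *ᵥ v) i = Um i ⬝ᵥ v := fun v i => rfl
  have hQQ : Q * Qᵀ = 1 := by
    ext i j
    simpa [hQdef, Matrix.mul_apply, Matrix.one_apply, dotProduct] using horth i j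
  have hQQ' : Qᵀ * Q = 1 := mul_eq_one_comm.mp hQQ
  have parseval : ∀ v w : Fin n → ℝ, (Q *ᵥ v) ⬝ᵥ (Q *ᵥ w) = v ⬝ᵥ w := by
    intro v w
    rw [Matrix.dotProduct_mulVec, ← Matrix.mulVec_transpose, Matrix.mulVec_mulVec, hQQ',
      Matrix.one_mulVec]
  set c := Q *ᵥ u with hc
  set d := Q *ᵥ um with hd
  have hcoeff : ∀ (v : Fin n → ℝ) (i : Fin n),
      (Q *ᵥ (Mm *ᵥ v)) i = lamm i * (Q *ᵥ v) i := by
    intro v i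
    rw [hQent, hQent, Matrix.dotProduct_mulVec, ← Matrix.mulVec_transpose, hMm.eq, heig i,
      smul_dotProduct, smul_eq_mul]
  have hd0 : ∀ i : Fin n, i ≠ 0 → d i = 0 := by
    intro i hi
    have h1 := hcoeff um i
    rw [hum_eig] at h1
    have h2 : (Q *ᵥ (lamm 0 • um)) i = lamm 0 * d i := by
      rw [Matrix.mulVec_smul]; simp [hd]
    have key : lamm 0 * d i = lamm i * d i := by rw [← h2, h1]
    have h3 : (lamm 0 - lamm i) * d i = 0 := by linear_combination key
    rcases mul_eq_zero.mp h3 with h | h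
    · exact absurd (sub_eq_zero.mp h).symm (ne_of_lt (hmult i hi))
    · exact h
  have hu1 : u ⬝ᵥ u = 1 := by rw [← HPCAux.norm2_sq, hu_norm]; norm_num
  have hum1 : um ⬝ᵥ um = 1 := by rw [← HPCAux.norm2_sq, hum_norm]; norm_num
  have hc1 : c ⬝ᵥ c = 1 := (parseval u u).trans hu1
  have hdd : d ⬝ᵥ d = 1 := (parseval um um).trans hum1
  have hcd : c ⬝ᵥ d = u ⬝ᵥ um := parseval u um
  have hd0sq : d 0 * d 0 = 1 := by
    have h : d ⬝ᵥ d = d 0 * d 0 := by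
      rw [dotProduct]
      exact Finset.sum_eq_single 0 (fun i _ hi => by rw [hd0 i hi]; ring) (by simp)
    rw [← h, hdd]
  have hcd0 : u ⬝ᵥ um = c 0 * d 0 := by
    rw [← hcd, dotProduct]
    exact Finset.sum_eq_single 0 (fun i _ hi => by rw [hd0 i hi]; ring) (by simp)
  have hc0le : c 0 ^ 2 ≤ 1 := by
    have hsum : ∑ i, c i ^ 2 = 1 := by
      rw [← hc1, dotProduct]; exact Finset.sum_congr rfl fun i _ => (sq (c i)).symm ▸ by ring
    calc c 0 ^ 2 ≤ ∑ i, c i ^ 2 :=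
          Finset.single_le_sum (fun i _ => sq_nonneg (c i)) (Finset.mem_univ 0)
      _ = 1 := hsum
  have hw : ∀ i, (Q *ᵥ (B *ᵥ u)) i = (lam - lamm i) * c i := by
    intro i
    have h1 : B *ᵥ u = lam • u - Mm *ᵥ u := by
      rw [hBdef, Matrix.sub_mulVec, hu_eig]
    rw [h1, Matrix.mulVec_sub, Matrix.mulVec_smul]
    have h2 := hcoeff u i
    simp only [Pi.sub_apply, Pi.smul_apply, smul_eq_mul, h2]
    rw [← hc]; ring
  have hBu_sq : norm2 (B *ᵥ u) ^ 2 = ∑ i, ((lam - lamm i) * c i) * ((lam - lamm i) * c i) := by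
    rw [HPCAux.norm2_sq, ← parseval (B *ᵥ u) (B *ᵥ u), dotProduct]
    exact Finset.sum_congr rfl fun i _ => by rw [hw i]
  have hδle : ∀ i : Fin n, i ≠ 0 → δ ≤ |lamm i - lam| := by
    intro i hi
    rw [hδdef]
    unfold HPC.minOffTop
    exact Finset.inf'_le _ (by simp [hi])
  have h1sum : 1 - c 0 ^ 2 = ∑ i ∈ Finset.univ.erase 0, c i ^ 2 := by
    have hsum : ∑ i, c i ^ 2 = 1 := by
      rw [← hc1, dotProduct]; exact Finset.sum_congr rfl fun i _ => by ring
    have h := Finset.add_sum_erase Finset.univ (fun i => c i ^ 2) (Finset.mem_univ 0)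
    have h' : c 0 ^ 2 + ∑ i ∈ Finset.univ.erase 0, c i ^ 2 = ∑ i, c i ^ 2 := h
    linarith [hsum, h']
  have key1 : δ ^ 2 * (1 - c 0 ^ 2) ≤ norm2 (B *ᵥ u) ^ 2 := by
    rw [hBu_sq, h1sum, Finset.mul_sum]
    calc ∑ i ∈ Finset.univ.erase 0, δ ^ 2 * c i ^ 2
        ≤ ∑ i ∈ Finset.univ.erase 0, ((lam - lamm i) * c i) * ((lam - lamm i) * c i) := by
          refine Finset.sum_le_sum fun i hi => ?_
          have h2 : δ ≤ |lam - lamm i| := by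
            rw [abs_sub_comm]; exact hδle i (Finset.ne_of_mem_erase hi)
          have h3 : δ ^ 2 ≤ (lam - lamm i) ^ 2 := by
            rw [← sq_abs (lam - lamm i)]; exact pow_le_pow_left₀ hδ.le h2 2
          nlinarith [sq_nonneg (c i), mul_le_mul_of_nonneg_right h3 (sq_nonneg (c i))]
      _ ≤ ∑ i, ((lam - lamm i) * c i) * ((lam - lamm i) * c i) :=
          Finset.sum_le_sum_of_subset_of_nonneg (Finset.erase_subset _ _)
            (fun i _ _ => mul_self_nonneg _)
  have hdiff_sq : norm2 (u - um) ^ 2 ≤ 2 * (1 - c 0 ^ 2) := by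
    have h1 : norm2 (u - um) ^ 2 = 2 - 2 * (c 0 * d 0) := by
      rw [HPCAux.norm2_sq, sub_dotProduct, dotProduct_sub, dotProduct_sub,
        dotProduct_comm um u, hu1, hum1, hcd0]
      ring
    have hpos : 0 ≤ c 0 * d 0 := by rw [← hcd0]; exact hsign
    have h2 : c 0 ^ 2 ≤ c 0 * d 0 := by nlinarith [hd0sq, hc0le, hpos]
    linarith [h1, h2]
  have hDK : δ * norm2 (u - um) ≤ Real.sqrt 2 * norm2 (B *ᵥ u) := by
    have ha : 0 ≤ δ * norm2 (u - um) := mul_nonneg hδ.le (HPCAux.norm2_nonneg _)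
    have hb : 0 ≤ Real.sqrt 2 * norm2 (B *ᵥ u) :=
      mul_nonneg (Real.sqrt_nonneg _) (HPCAux.norm2_nonneg _)
    have hsq : (δ * norm2 (u - um)) ^ 2 ≤ (Real.sqrt 2 * norm2 (B *ᵥ u)) ^ 2 := by
      have h2 : Real.sqrt 2 ^ 2 = 2 := Real.sq_sqrt (by norm_num)
      rw [mul_pow, mul_pow, h2]
      calc δ ^ 2 * norm2 (u - um) ^ 2 ≤ δ ^ 2 * (2 * (1 - c 0 ^ 2)) :=
            mul_le_mul_of_nonneg_left hdiff_sq (sq_nonneg δ)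
        _ = 2 * (δ ^ 2 * (1 - c 0 ^ 2)) := by ring
        _ ≤ 2 * norm2 (B *ᵥ u) ^ 2 := by linarith [key1]
    calc δ * norm2 (u - um) = Real.sqrt ((δ * norm2 (u - um)) ^ 2) := (Real.sqrt_sq ha).symm
      _ ≤ Real.sqrt ((Real.sqrt 2 * norm2 (B *ᵥ u)) ^ 2) := Real.sqrt_le_sqrt hsq
      _ = Real.sqrt 2 * norm2 (B *ᵥ u) := Real.sqrt_sq hb
  have htri : norm2 (B *ᵥ u)
      ≤ norm2 (B *ᵥ um) + s * (Real.sqrt 2 * norm2 (B *ᵥ u) / δ) := by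
    have h0 : u = um + (u - um) := by abel
    have h1 : B *ᵥ u = B *ᵥ um + B *ᵥ (u - um) := by
      conv_lhs => rw [h0]
      rw [Matrix.mulVec_add]
    have h2 := HPCAux.norm2_add_le (B *ᵥ um) (B *ᵥ (u - um))
    have h3 : norm2 (B *ᵥ (u - um)) ≤ s * norm2 (u - um) := by
      rw [hsdef]; exact HPCAux.specNorm_mulVec_le B (u - um)
    have h4 : norm2 (u - um) ≤ Real.sqrt 2 * norm2 (B *ᵥ u) / δ := by
      rw [le_div_iff₀ hδ]
      linarith [hDK]
    have h5 : s * norm2 (u - um) ≤ s * (Real.sqrt 2 * norm2 (B *ᵥ u) / δ) :=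
      mul_le_mul_of_nonneg_left h4 hs0
    calc norm2 (B *ᵥ u) = norm2 (B *ᵥ um + B *ᵥ (u - um)) := by rw [← h1]
      _ ≤ norm2 (B *ᵥ um) + norm2 (B *ᵥ (u - um)) := h2
      _ ≤ _ := by linarith [h3, h5]
  have hη1 : 0 < 1 - Real.sqrt 2 * s / δ := by linarith [hη]
  rw [le_div_iff₀ hη1]
  have e : norm2 (B *ᵥ u) * (1 - Real.sqrt 2 * s / δ)
      = norm2 (B *ᵥ u) - s * (Real.sqrt 2 * norm2 (B *ᵥ u) / δ) := by ring
  rw [e]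
  linarith [htri]
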